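/- For every 0 ≤ i ≤ T−1 and 0 ≤ s ≤ T−1, the matrix P_{i|s} of the truncated Riccati recursion is symmetric and satisfies Q̄_min ⪯ P_{i|s} ⪯ P̄_max; in particular every P_{i|s} is positive definite. -/

import Mathlib

open Matrix Finset
open scoped Matrix.Norms.L2Operator

noncomputable section

/-- Euclidean norm of a real vector. -/
def enorm {k : ℕ} (x : Fin k → ℝ) : ℝ := ‖(WithLp.equiv 2 (Fin k → ℝ)).symm x‖

/-- Largest eigenvalue (supremum of the real spectrum) of a square real matrix. -/
def lmax {k : ℕ} (M : Matrix (Fin k) (Fin k) ℝ) : ℝ := sSup (spectrum ℝ M)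

/-- Smallest eigenvalue (infimum of the real spectrum) of a square real matrix. -/
def lmin {k : ℕ} (M : Matrix (Fin k) (Fin k) ℝ) : ℝ := sInf (spectrum ℝ M)

variable {n m : ℕ}

/-- The LQR feedback gain associated with cost matrix `R` and value matrix `P'`. -/
def gainK (A : Matrix (Fin n) (Fin n) ℝ) (B : Matrix (Fin n) (Fin m) ℝ)
    (R : Matrix (Fin m) (Fin m) ℝ) (P' : Matrix (Fin n) (Fin n) ℝ) :
    Matrix (Fin m) (Fin n) ℝ :=
  -((R + Bᵀ * P' * B)⁻¹ * Bᵀ * P' * A)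

/-- One backwards Riccati step. -/
def ricStep (A : Matrix (Fin n) (Fin n) ℝ) (B : Matrix (Fin n) (Fin m) ℝ)
    (R : Matrix (Fin m) (Fin m) ℝ) (Q P' : Matrix (Fin n) (Fin n) ℝ) :
    Matrix (Fin n) (Fin n) ℝ :=
  Aᵀ * P' * A + Q + Aᵀ * P' * B * gainK A B R P'

/-- Truncated cost matrices `Q_{i|s}`. -/
def trunc {N : Type*} (Q : ℕ → N) (i s : ℕ) : N := if i ≤ s then Q i else Q s

/-- Backwards truncated Riccati recursion: `ricBackTr A B T Q R s d = P_{T-1-d|s}`. -/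
def ricBackTr (A : Matrix (Fin n) (Fin n) ℝ) (B : Matrix (Fin n) (Fin m) ℝ) (T : ℕ)
    (Q : ℕ → Matrix (Fin n) (Fin n) ℝ) (R : ℕ → Matrix (Fin m) (Fin m) ℝ) (s : ℕ) :
    ℕ → Matrix (Fin n) (Fin n) ℝ
  | 0 => trunc Q (T - 1) s
  | d + 1 => ricStep A B (trunc R (T - 2 - d) s) (trunc Q (T - 2 - d) s)
      (ricBackTr A B T Q R s d)

/-- `Pts A B T Q R i s = P_{i|s}`, the truncated Riccati value matrix. -/
def Pts (A : Matrix (Fin n) (Fin n) ℝ) (B : Matrix (Fin n) (Fin m) ℝ) (T : ℕ)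
    (Q : ℕ → Matrix (Fin n) (Fin n) ℝ) (R : ℕ → Matrix (Fin m) (Fin m) ℝ) (i s : ℕ) :
    Matrix (Fin n) (Fin n) ℝ :=
  ricBackTr A B T Q R s (T - 1 - i)

/-- `Kts A B T Q R i s = K_{i|s}`, the truncated Riccati gain. -/
def Kts (A : Matrix (Fin n) (Fin n) ℝ) (B : Matrix (Fin n) (Fin m) ℝ) (T : ℕ)
    (Q : ℕ → Matrix (Fin n) (Fin n) ℝ) (R : ℕ → Matrix (Fin m) (Fin m) ℝ) (i s : ℕ) :
    Matrix (Fin m) (Fin n) ℝ :=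
  gainK A B (trunc R i s) (Pts A B T Q R (i + 1) s)

/-- `xts A B T Q R x₀ s i = x_{i|s}`, the predicted trajectory planned with information up to
time `s`. -/
def xts (A : Matrix (Fin n) (Fin n) ℝ) (B : Matrix (Fin n) (Fin m) ℝ) (T : ℕ)
    (Q : ℕ → Matrix (Fin n) (Fin n) ℝ) (R : ℕ → Matrix (Fin m) (Fin m) ℝ)
    (x₀ : Fin n → ℝ) (s : ℕ) : ℕ → Fin n → ℝ
  | 0 => x₀
  | i + 1 => (A + B * Kts A B T Q R i s) *ᵥ xts A B T Q R x₀ s i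


section RiccatiAux

variable {n m : ℕ}

lemma herm_tr {k : ℕ} {M : Matrix (Fin k) (Fin k) ℝ} (h : M.IsHermitian) : Mᵀ = M := by
  simpa [Matrix.conjTranspose_eq_transpose_of_trivial, Matrix.IsSymm] using h

lemma herm_of_tr {k : ℕ} {M : Matrix (Fin k) (Fin k) ℝ} (h : Mᵀ = M) : M.IsHermitian := by
  simpa [Matrix.IsHermitian, Matrix.conjTranspose_eq_transpose_of_trivial] using h

lemma quad_nonneg {k : ℕ} {M : Matrix (Fin k) (Fin k) ℝ} (h : M.PosSemidef) (x : Fin k → ℝ) :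
    0 ≤ x ⬝ᵥ M *ᵥ x := by simpa using h.dotProduct_mulVec_nonneg x

lemma psd_of_quad {k : ℕ} {M : Matrix (Fin k) (Fin k) ℝ} (hH : M.IsHermitian)
    (h : ∀ x, 0 ≤ x ⬝ᵥ M *ᵥ x) : M.PosSemidef := .of_dotProduct_mulVec_nonneg hH fun x => by simpa using h x

lemma dp_shift {k l : ℕ} (C : Matrix (Fin k) (Fin l) ℝ) (v : Fin k → ℝ) (u : Fin l → ℝ) :
    v ⬝ᵥ (C *ᵥ u) = (Cᵀ *ᵥ v) ⬝ᵥ u := by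
  rw [Matrix.dotProduct_mulVec, Matrix.mulVec_transpose]

lemma symm_swap {k : ℕ} {M : Matrix (Fin k) (Fin k) ℝ} (hM : Mᵀ = M) (v w : Fin k → ℝ) :
    v ⬝ᵥ M *ᵥ w = w ⬝ᵥ M *ᵥ v := by
  rw [Matrix.dotProduct_mulVec, ← Matrix.vecMul_transpose, hM]
  exact dotProduct_comm _ _

lemma quad_conj {k l : ℕ} (P : Matrix (Fin k) (Fin k) ℝ) (C : Matrix (Fin k) (Fin l) ℝ)
    (x : Fin l → ℝ) : x ⬝ᵥ (Cᵀ * P * C) *ᵥ x = (C *ᵥ x) ⬝ᵥ P *ᵥ (C *ᵥ x) := by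
  rw [← Matrix.mulVec_mulVec, ← Matrix.mulVec_mulVec, Matrix.dotProduct_mulVec,
    Matrix.vecMul_transpose]

/-- Key completion-of-squares identity for one Riccati step. -/
lemma key_identity (A : Matrix (Fin n) (Fin n) ℝ) (B : Matrix (Fin n) (Fin m) ℝ)
    (R : Matrix (Fin m) (Fin m) ℝ) (Q P' : Matrix (Fin n) (Fin n) ℝ)
    (hP' : P'ᵀ = P') (hR : Rᵀ = R)
    (hS : IsUnit (R + Bᵀ * P' * B).det)
    (x : Fin n → ℝ) (u : Fin m → ℝ) :
    x ⬝ᵥ (ricStep A B R Q P') *ᵥ x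
      + (u - gainK A B R P' *ᵥ x) ⬝ᵥ (R + Bᵀ * P' * B) *ᵥ (u - gainK A B R P' *ᵥ x)
    = x ⬝ᵥ Q *ᵥ x + u ⬝ᵥ R *ᵥ u
      + (A *ᵥ x + B *ᵥ u) ⬝ᵥ P' *ᵥ (A *ᵥ x + B *ᵥ u) := by
  set S := R + Bᵀ * P' * B with hSdef
  have hSt : Sᵀ = S := by
    rw [hSdef, Matrix.transpose_add, hR, Matrix.transpose_mul, Matrix.transpose_mul,
      Matrix.transpose_transpose, hP', Matrix.mul_assoc]
  set y := A *ᵥ x with hy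
  set p := P' *ᵥ y with hp
  set a := Bᵀ *ᵥ p with ha
  have hw : gainK A B R P' *ᵥ x = -(S⁻¹ *ᵥ a) := by
    rw [gainK, Matrix.neg_mulVec, ← hSdef]
    congr 1
    rw [← Matrix.mulVec_mulVec, ← Matrix.mulVec_mulVec, ← Matrix.mulVec_mulVec, ← hy, ← hp, ← ha]
  set w := gainK A B R P' *ᵥ x with hwdef
  have hSw : S *ᵥ w = -a := by
    rw [hw, Matrix.mulVec_neg, Matrix.mulVec_mulVec, Matrix.mul_nonsing_inv _ hS,
      Matrix.one_mulVec]
  have hBv' : ∀ v : Fin m → ℝ, (B *ᵥ v) ⬝ᵥ p = v ⬝ᵥ a := by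
    intro v
    rw [dotProduct_comm, dp_shift, ← ha, dotProduct_comm]
  have hBv : ∀ v : Fin m → ℝ, y ⬝ᵥ P' *ᵥ (B *ᵥ v) = v ⬝ᵥ a := by
    intro v
    rw [symm_swap hP', ← hp, hBv' v]
  have h1 : x ⬝ᵥ (ricStep A B R Q P') *ᵥ x
      = x ⬝ᵥ Q *ᵥ x + y ⬝ᵥ p + w ⬝ᵥ a := by
    rw [ricStep, Matrix.add_mulVec, Matrix.add_mulVec, dotProduct_add, dotProduct_add,
      quad_conj, ← hy, ← hp]
    have hterm : x ⬝ᵥ (Aᵀ * P' * B * gainK A B R P') *ᵥ x = w ⬝ᵥ a := by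
      rw [← Matrix.mulVec_mulVec, ← hwdef, ← Matrix.mulVec_mulVec, ← Matrix.mulVec_mulVec,
        dp_shift, Matrix.transpose_transpose, ← hy, hBv w]
    rw [hterm]
    ring
  have h2 : (u - w) ⬝ᵥ S *ᵥ (u - w)
      = u ⬝ᵥ S *ᵥ u + 2 * (u ⬝ᵥ a) - w ⬝ᵥ a := by
    rw [Matrix.mulVec_sub, dotProduct_sub, sub_dotProduct, sub_dotProduct,
      symm_swap hSt w u, hSw]
    simp only [dotProduct_neg]
    ring
  have h3 : (y + B *ᵥ u) ⬝ᵥ P' *ᵥ (y + B *ᵥ u)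
      = y ⬝ᵥ p + 2 * (u ⬝ᵥ a) + u ⬝ᵥ (Bᵀ * P' * B) *ᵥ u := by
    rw [Matrix.mulVec_add, dotProduct_add, add_dotProduct, add_dotProduct, ← hp,
      hBv u, hBv' u]
    have : (B *ᵥ u) ⬝ᵥ P' *ᵥ (B *ᵥ u) = u ⬝ᵥ (Bᵀ * P' * B) *ᵥ u := (quad_conj P' B u).symm
    rw [this]
    ring
  have hsplit : u ⬝ᵥ S *ᵥ u = u ⬝ᵥ R *ᵥ u + u ⬝ᵥ (Bᵀ * P' * B) *ᵥ u := by
    rw [hSdef, Matrix.add_mulVec, dotProduct_add]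
  rw [h1, h2, h3, hsplit]
  ring

lemma ricStep_herm (A : Matrix (Fin n) (Fin n) ℝ) (B : Matrix (Fin n) (Fin m) ℝ)
    {R : Matrix (Fin m) (Fin m) ℝ} {Q P' : Matrix (Fin n) (Fin n) ℝ}
    (hP' : P'ᵀ = P') (hQ : Qᵀ = Q) (hR : Rᵀ = R) :
    (ricStep A B R Q P')ᵀ = ricStep A B R Q P' := by
  have hSt : (R + Bᵀ * P' * B)ᵀ = R + Bᵀ * P' * B := by
    rw [Matrix.transpose_add, hR, Matrix.transpose_mul, Matrix.transpose_mul,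
      Matrix.transpose_transpose, hP', Matrix.mul_assoc]
  have hSi : ((R + Bᵀ * P' * B)⁻¹)ᵀ = (R + Bᵀ * P' * B)⁻¹ := by
    rw [Matrix.transpose_nonsing_inv, hSt]
  set C := Bᵀ * P' * A with hC
  set Si := (R + Bᵀ * P' * B)⁻¹ with hSidef
  have hCt : Cᵀ = Aᵀ * (P' * B) := by
    rw [hC, Matrix.transpose_mul, Matrix.transpose_mul, Matrix.transpose_transpose, hP']
  have hKC : Aᵀ * P' * B * gainK A B R P' = -(Cᵀ * Si * C) := by
    rw [gainK, Matrix.mul_neg, ← hSidef]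
    congr 1
    rw [hCt]
    simp only [Matrix.mul_assoc, hC]
  have hsym3 : ∀ D : Matrix (Fin m) (Fin n) ℝ, (Dᵀ * Si * D)ᵀ = Dᵀ * Si * D := by
    intro D
    rw [Matrix.transpose_mul, Matrix.transpose_mul, Matrix.transpose_transpose, hSi,
      Matrix.mul_assoc]
  have hsym1 : (Aᵀ * P' * A)ᵀ = Aᵀ * P' * A := by
    rw [Matrix.transpose_mul, Matrix.transpose_mul, Matrix.transpose_transpose, hP',
      Matrix.mul_assoc]
  rw [ricStep, hKC, Matrix.transpose_add, Matrix.transpose_add, hsym1, hQ,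
    Matrix.transpose_neg, hsym3 C]

lemma S_posdef (B : Matrix (Fin n) (Fin m) ℝ) {R : Matrix (Fin m) (Fin m) ℝ}
    {P' : Matrix (Fin n) (Fin n) ℝ} (hR : R.PosDef) (hP' : P'.PosSemidef) :
    (R + Bᵀ * P' * B).PosDef := by
  have h := hP'.conjTranspose_mul_mul_same B
  rw [Matrix.conjTranspose_eq_transpose_of_trivial] at h
  exact hR.add_posSemidef h

lemma ricStep_sub_posSemidef (A : Matrix (Fin n) (Fin n) ℝ) (B : Matrix (Fin n) (Fin m) ℝ)
    {R : Matrix (Fin m) (Fin m) ℝ} {Q P' : Matrix (Fin n) (Fin n) ℝ}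
    (hP' : P'.PosSemidef) (hR : R.PosDef) (hQ : Qᵀ = Q) :
    (ricStep A B R Q P' - Q).PosSemidef := by
  have hS := S_posdef B hR hP'
  have hSdet : IsUnit (R + Bᵀ * P' * B).det := hS.det_pos.ne'.isUnit
  apply psd_of_quad
  · exact herm_of_tr (by rw [Matrix.transpose_sub,
      ricStep_herm A B (herm_tr hP'.1) hQ (herm_tr hR.1), hQ])
  · intro x
    have hk := key_identity A B R Q P' (herm_tr hP'.1) (herm_tr hR.1) hSdet x
      (gainK A B R P' *ᵥ x)
    rw [sub_self] at hk
    simp only [zero_dotProduct] at hk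
    rw [Matrix.sub_mulVec, dotProduct_sub]
    have h1 := quad_nonneg hR.posSemidef (gainK A B R P' *ᵥ x)
    have h2 := quad_nonneg hP' (A *ᵥ x + B *ᵥ (gainK A B R P' *ᵥ x))
    linarith

lemma ricStep_mono (A : Matrix (Fin n) (Fin n) ℝ) (B : Matrix (Fin n) (Fin m) ℝ)
    {R1 R2 : Matrix (Fin m) (Fin m) ℝ} {Q1 Q2 P1 P2 : Matrix (Fin n) (Fin n) ℝ}
    (hP1 : P1.PosSemidef) (hP12 : (P2 - P1).PosSemidef)
    (hR1 : R1.PosDef) (hR12 : (R2 - R1).PosSemidef)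
    (hQ12 : (Q2 - Q1).PosSemidef) (hQ1 : Q1ᵀ = Q1) (hQ2 : Q2ᵀ = Q2) :
    (ricStep A B R2 Q2 P2 - ricStep A B R1 Q1 P1).PosSemidef := by
  have hP2 : P2.PosSemidef := by
    have h := hP1.add hP12
    rwa [add_sub_cancel] at h
  have hR2 : R2.PosDef := by
    have h := hR1.add_posSemidef hR12
    rwa [add_sub_cancel] at h
  have hS1 := S_posdef B hR1 hP1
  have hS2 := S_posdef B hR2 hP2
  apply psd_of_quad
  · exact herm_of_tr (by rw [Matrix.transpose_sub,
      ricStep_herm A B (herm_tr hP1.1) hQ1 (herm_tr hR1.1),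
      ricStep_herm A B (herm_tr hP2.1) hQ2 (herm_tr hR2.1)])
  · intro x
    set u := gainK A B R2 P2 *ᵥ x with hu
    have hk2 := key_identity A B R2 Q2 P2 (herm_tr hP2.1) (herm_tr hR2.1)
      hS2.det_pos.ne'.isUnit x u
    rw [← hu, sub_self] at hk2
    simp only [zero_dotProduct] at hk2
    have hk1 := key_identity A B R1 Q1 P1 (herm_tr hP1.1) (herm_tr hR1.1)
      hS1.det_pos.ne'.isUnit x u
    have hnn := quad_nonneg hS1.posSemidef (u - gainK A B R1 P1 *ᵥ x)
    set z := A *ᵥ x + B *ᵥ u with hz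
    have e1 : x ⬝ᵥ Q1 *ᵥ x ≤ x ⬝ᵥ Q2 *ᵥ x := by
      have := quad_nonneg hQ12 x
      rw [Matrix.sub_mulVec, dotProduct_sub] at this; linarith
    have e2 : u ⬝ᵥ R1 *ᵥ u ≤ u ⬝ᵥ R2 *ᵥ u := by
      have := quad_nonneg hR12 u
      rw [Matrix.sub_mulVec, dotProduct_sub] at this; linarith
    have e3 : z ⬝ᵥ P1 *ᵥ z ≤ z ⬝ᵥ P2 *ᵥ z := by
      have := quad_nonneg hP12 z
      rw [Matrix.sub_mulVec, dotProduct_sub] at this; linarith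
    rw [Matrix.sub_mulVec, dotProduct_sub]
    linarith

lemma trunc_mem {N : Type*} (Q : ℕ → N) (i s : ℕ) : ∃ j, j ≤ i ∧ trunc Q i s = Q j := by
  unfold trunc
  split
  · exact ⟨i, le_refl i, rfl⟩
  · next h => exact ⟨s, (not_le.mp h).le, rfl⟩

end RiccatiAux

/-- Every truncated Riccati value matrix `P_{i|s}` is symmetric and sandwiched between
`Q̄_min` and `P̄_max` in the Loewner order; in particular it is positive definite. -/
theorem truncated_riccati_sandwich {n m : ℕ} (hn : 1 ≤ n) (hm : 1 ≤ m)
    (A : Matrix (Fin n) (Fin n) ℝ) (B : Matrix (Fin n) (Fin m) ℝ)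
    (T : ℕ) (hT : 2 ≤ T)
    (Q : ℕ → Matrix (Fin n) (Fin n) ℝ) (R : ℕ → Matrix (Fin m) (Fin m) ℝ)
    (hQ : ∀ t ≤ T - 1, (Q t).PosSemidef) (hR : ∀ t ≤ T - 2, (R t).PosDef)
    (Qmin Qmax : Matrix (Fin n) (Fin n) ℝ) (Rmin Rmax : Matrix (Fin m) (Fin m) ℝ)
    (hQminPD : Qmin.PosDef) (hRminPD : Rmin.PosDef)
    (hQmaxH : Qmax.IsHermitian) (hRmaxH : Rmax.IsHermitian)
    (hQlb : ∀ t ≤ T - 1, (Q t - Qmin).PosSemidef)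
    (hQub : ∀ t ≤ T - 1, (Qmax - Q t).PosSemidef)
    (hRlb : ∀ t ≤ T - 2, (R t - Rmin).PosSemidef)
    (hRub : ∀ t ≤ T - 2, (Rmax - R t).PosSemidef)
    (Pm : Matrix (Fin n) (Fin n) ℝ) (hPmPD : Pm.PosDef)
    (hDARE : Pm = Qmax + Aᵀ * Pm * A -
      Aᵀ * Pm * B * (Rmax + Bᵀ * Pm * B)⁻¹ * Bᵀ * Pm * A) :
    ∀ i ≤ T - 1, ∀ s ≤ T - 1,
      (Pts A B T Q R i s).IsHermitian ∧
      (Pts A B T Q R i s - Qmin).PosSemidef ∧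
      (Pm - Pts A B T Q R i s).PosSemidef ∧
      (Pts A B T Q R i s).PosDef := by
  -- abbreviations
  have hRmaxPD : Rmax.PosDef := by
    have h := (hR 0 (Nat.zero_le _)).add_posSemidef (hRub 0 (Nat.zero_le _))
    rwa [add_sub_cancel] at h
  have hdare : ricStep A B Rmax Qmax Pm = Pm := by
    have h : ricStep A B Rmax Qmax Pm
        = Qmax + Aᵀ * Pm * A - Aᵀ * Pm * B * (Rmax + Bᵀ * Pm * B)⁻¹ * Bᵀ * Pm * A := by
      simp only [ricStep, gainK, Matrix.mul_neg, Matrix.mul_assoc, sub_eq_add_neg]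
      abel
    rw [h, ← hDARE]
  have hPmQmax : (Pm - Qmax).PosSemidef := by
    have h := ricStep_sub_posSemidef A B hPmPD.posSemidef hRmaxPD (herm_tr hQmaxH)
    rwa [hdare] at h
  have key : ∀ s d, (ricBackTr A B T Q R s d).IsHermitian ∧
      (ricBackTr A B T Q R s d - Qmin).PosSemidef ∧
      (Pm - ricBackTr A B T Q R s d).PosSemidef := by
    intro s d
    induction d with
    | zero =>
      obtain ⟨j, hj, hjeq⟩ := trunc_mem Q (T - 1) s
      have hj' : j ≤ T - 1 := hj
      show (trunc Q (T-1) s).IsHermitian ∧ (trunc Q (T-1) s - Qmin).PosSemidef ∧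
        (Pm - trunc Q (T-1) s).PosSemidef
      rw [hjeq]
      refine ⟨(hQ j hj').1, hQlb j hj', ?_⟩
      have h := hPmQmax.add (hQub j hj')
      rwa [sub_add_sub_cancel] at h
    | succ d ih =>
      obtain ⟨ihH, ihL, ihU⟩ := ih
      obtain ⟨jQ, hjQ, hjQeq⟩ := trunc_mem Q (T - 2 - d) s
      obtain ⟨jR, hjR, hjReq⟩ := trunc_mem R (T - 2 - d) s
      have hjQ' : jQ ≤ T - 1 := le_trans hjQ (le_trans (Nat.sub_le _ _)
        (Nat.sub_le_sub_left (by norm_num) T))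
      have hjR' : jR ≤ T - 2 := le_trans hjR (Nat.sub_le _ _)
      set P := ricBackTr A B T Q R s d with hP
      have hPpsd : P.PosSemidef := by
        have h := hQminPD.posSemidef.add ihL
        rwa [add_sub_cancel] at h
      have hRjPD : (trunc R (T - 2 - d) s).PosDef := by rw [hjReq]; exact hR jR hjR'
      have hQjH : (trunc Q (T - 2 - d) s)ᵀ = trunc Q (T - 2 - d) s := by
        rw [hjQeq]; exact herm_tr (hQ jQ hjQ').1
      have stepH : (ricStep A B (trunc R (T-2-d) s) (trunc Q (T-2-d) s) P).IsHermitian :=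
        herm_of_tr (ricStep_herm A B (herm_tr ihH) hQjH (herm_tr hRjPD.1))
      have stepL : (ricStep A B (trunc R (T-2-d) s) (trunc Q (T-2-d) s) P
          - Qmin).PosSemidef := by
        have h1 := ricStep_sub_posSemidef A B hPpsd hRjPD hQjH
        have h2 : (trunc Q (T-2-d) s - Qmin).PosSemidef := by rw [hjQeq]; exact hQlb jQ hjQ'
        have h := h1.add h2
        rwa [sub_add_sub_cancel] at h
      have stepU : (Pm - ricStep A B (trunc R (T-2-d) s) (trunc Q (T-2-d) s) P).PosSemidef := by
        have h := ricStep_mono A B hPpsd ihU hRjPD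
          (by rw [hjReq]; exact hRub jR hjR') (by rw [hjQeq]; exact hQub jQ hjQ')
          hQjH (herm_tr hQmaxH)
        rwa [hdare] at h
      exact ⟨stepH, stepL, stepU⟩
  intro i _ s _
  obtain ⟨h1, h2, h3⟩ := key s (T - 1 - i)
  refine ⟨h1, h2, h3, ?_⟩
  have h := hQminPD.add_posSemidef h2
  rwa [add_sub_cancel] at h

end
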